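/- arXiv:1411.7816 — 4 statements merged into one kernel-verified Lean document; each statement's English description precedes it below -/
import Mathlib

section
/- Let ω satisfy ω² = ω − 1, identify x+yω ∈ ℤ[ω] with (x,y) ∈ ℤ², and let N(x+yω) = x² + xy + y². Then for all integers a, b: if a+bω ≡ −ω (mod 7+9ω) in ℤ[ω] (i.e., there exist integers u, v with a = 7u − 9v and b + 1 = 9u + 16v), then a² + ab + b² ≥ 1, and a² + ab + b² = 1 if and only if (a,b) = (0, −1). In other words, −ω is the unique representative of minimal norm of its residue class modulo 7+9ω. -/
/-- `-ω` is the unique representative of minimal norm of its residue class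
modulo `7+9ω` in `ℤ[ω]`, where `ω² = ω - 1` and `N(x+yω) = x² + xy + y²`. -/
theorem stmt_2 :
    ∀ a b : ℤ, (∃ u v : ℤ, a = 7 * u - 9 * v ∧ b + 1 = 9 * u + 16 * v) →
      a ^ 2 + a * b + b ^ 2 ≥ 1 ∧
        (a ^ 2 + a * b + b ^ 2 = 1 ↔ a = 0 ∧ b = -1) := by
  rintro a b ⟨u, v, ha, hb⟩
  have hM0 : a ^ 2 + a * b + b ^ 2 ≥ 0 := by
    nlinarith [sq_nonneg (2 * a + b), sq_nonneg b]
  have hne : a ^ 2 + a * b + b ^ 2 ≠ 0 := by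
    intro h
    have hb2 : b ^ 2 ≤ 0 := by nlinarith [sq_nonneg (2 * a + b)]
    have hb0 : b = 0 := by nlinarith [sq_nonneg b]
    have ha0 : a = 0 := by nlinarith [sq_nonneg a]
    omega
  constructor
  · omega
  · constructor
    · intro h
      have hb2 : b ^ 2 ≤ 1 := by nlinarith [sq_nonneg (2 * a + b)]
      have hbb : -1 ≤ b ∧ b ≤ 1 := by
        constructor <;> nlinarith
      have ha2 : (2 * a + b) ^ 2 ≤ 4 := by nlinarith [sq_nonneg b]
      have haa : -1 ≤ a ∧ a ≤ 1 := by
        constructor <;> nlinarith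
      obtain ⟨h1, h2⟩ := haa
      obtain ⟨h3, h4⟩ := hbb
      interval_cases a <;> interval_cases b <;> omega
    · rintro ⟨rfl, rfl⟩
      norm_num
end

section
/- There is no function d : (ℤ×ℤ) → (ℤ×ℤ) → ℕ with the following three properties: (i) d(p, q) depends only on the residue class of p − q modulo 7+9ω (that is, if p − q ≡ p' − q' (mod 7+9ω) then d(p,q) = d(p',q')); (ii) whenever (x,y) is a representative of the class of p − q modulo 7+9ω of minimal norm x² + xy + y², one has d(p,q) = |x| + |y|; (iii) d satisfies the triangle inequality d(p,r) ≤ d(p,q) + d(q,r) for all p, q, r. Indeed, taking p = (−6,7) (i.e., −6+7ω), q = (1,0), r = (1,−1) (i.e., 1−ω), one gets d(p,q) = |−7|+|7| = 14 while d(p,r) + d(r,q) = (|2|+|−8|) + (|0|+|−1|) = 10 + 1 = 11 < 14. Hence the Mannheim distance d_M defined in the corrected article fails the triangle inequality and is not a metric. -/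
/-- Congruence modulo `7+9ω` in `ℤ[ω] ≅ ℤ × ℤ`: `(a,b) ≡ (c,d)` iff their
difference is a `ℤ[ω]`-multiple of `7+9ω`, i.e. of the form `(7u-9v, 9u+16v)`. -/
def congMod193 (p q : ℤ × ℤ) : Prop :=
  ∃ u v : ℤ, p.1 - q.1 = 7 * u - 9 * v ∧ p.2 - q.2 = 9 * u + 16 * v

/-- The norm `N(x+yω) = x² + xy + y²`. -/
def normZω (p : ℤ × ℤ) : ℤ := p.1 ^ 2 + p.1 * p.2 + p.2 ^ 2

lemma bigA (M A B : ℤ) (hM : M ≤ 27936) (h : 193 ≤ A ∨ A ≤ -193) :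
    M ≤ A ^ 2 + A * B + B ^ 2 := by
  rcases h with h | h <;> nlinarith [sq_nonneg (A + 2 * B), h]

lemma bigB (M A B : ℤ) (hM : M ≤ 27936) (h : 193 ≤ B ∨ B ≤ -193) :
    M ≤ A ^ 2 + A * B + B ^ 2 := by
  rcases h with h | h <;> nlinarith [sq_nonneg (2 * A + B), h]

lemma min1 (u v : ℤ) :
    (9457 : ℤ) ≤ (-49 - 193 * u) ^ 2 + (-49 - 193 * u) * (112 - 193 * v)
      + (112 - 193 * v) ^ 2 := by
  have hu : u = 0 ∨ u = -1 ∨ (193 ≤ -49 - 193 * u ∨ -49 - 193 * u ≤ -193) := by omega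
  have hv : v = 0 ∨ v = 1 ∨ (193 ≤ 112 - 193 * v ∨ 112 - 193 * v ≤ -193) := by omega
  rcases hu with rfl | rfl | hu
  · rcases hv with rfl | rfl | hv
    · norm_num
    · norm_num
    · exact bigB _ _ _ (by norm_num) hv
  · rcases hv with rfl | rfl | hv
    · norm_num
    · norm_num
    · exact bigB _ _ _ (by norm_num) hv
  · exact bigA _ _ _ (by norm_num) hu

lemma min2 (u v : ℤ) :
    (10036 : ℤ) ≤ (-40 - 193 * u) ^ 2 + (-40 - 193 * u) * (119 - 193 * v)
      + (119 - 193 * v) ^ 2 := by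
  have hu : u = 0 ∨ u = -1 ∨ (193 ≤ -40 - 193 * u ∨ -40 - 193 * u ≤ -193) := by omega
  have hv : v = 0 ∨ v = 1 ∨ (193 ≤ 119 - 193 * v ∨ 119 - 193 * v ≤ -193) := by omega
  rcases hu with rfl | rfl | hu
  · rcases hv with rfl | rfl | hv
    · norm_num
    · norm_num
    · exact bigB _ _ _ (by norm_num) hv
  · rcases hv with rfl | rfl | hv
    · norm_num
    · norm_num
    · exact bigB _ _ _ (by norm_num) hv
  · exact bigA _ _ _ (by norm_num) hu

lemma min3 (u v : ℤ) :
    (193 : ℤ) ≤ (-9 - 193 * u) ^ 2 + (-9 - 193 * u) * (-7 - 193 * v)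
      + (-7 - 193 * v) ^ 2 := by
  have hu : u = 0 ∨ u = -1 ∨ (193 ≤ -9 - 193 * u ∨ -9 - 193 * u ≤ -193) := by omega
  have hv : v = 0 ∨ v = -1 ∨ (193 ≤ -7 - 193 * v ∨ -7 - 193 * v ≤ -193) := by omega
  rcases hu with rfl | rfl | hu
  · rcases hv with rfl | rfl | hv
    · norm_num
    · norm_num
    · exact bigB _ _ _ (by norm_num) hv
  · rcases hv with rfl | rfl | hv
    · norm_num
    · norm_num
    · exact bigB _ _ _ (by norm_num) hv
  · exact bigA _ _ _ (by norm_num) hu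

/-- There is no function `d : ℤ[ω] → ℤ[ω] → ℕ` that (i) depends only on the residue
class of the difference modulo `7+9ω`, (ii) equals the Mannheim weight `|x|+|y|` of any
minimal-norm representative `(x,y)` of that class, and (iii) satisfies the triangle
inequality. Hence the Mannheim distance `d_M` of the article is not a metric. -/
theorem stmt_3 :
    ¬ ∃ d : (ℤ × ℤ) → (ℤ × ℤ) → ℕ,
      (∀ p q p' q' : ℤ × ℤ, congMod193 (p - q) (p' - q') → d p q = d p' q') ∧
      (∀ p q : ℤ × ℤ, ∀ x y : ℤ,
        congMod193 (p - q) (x, y) →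
        (∀ x' y' : ℤ, congMod193 (p - q) (x', y') → normZω (x, y) ≤ normZω (x', y')) →
        d p q = x.natAbs + y.natAbs) ∧
      (∀ p q r : ℤ × ℤ, d p r ≤ d p q + d q r) := by
  rintro ⟨d, _hi, hii, hiii⟩
  have h1 : d (-6, 7) (1, 0) = 14 := by
    have := hii (-6, 7) (1, 0) (-7) 7
      ⟨0, 0, by norm_num [Prod.sub_def], by norm_num [Prod.sub_def]⟩
      (by
        rintro x' y' ⟨u, v, e1, e2⟩
        simp only [Prod.sub_def, Prod.fst, Prod.snd] at e1 e2
        have hx : x' = -7 - 7 * u + 9 * v := by omega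
        have hy : y' = 7 - 9 * u - 16 * v := by omega
        subst hx hy
        have key : (193 : ℤ) * normZω (-7 - 7 * u + 9 * v, 7 - 9 * u - 16 * v) =
            (-49 - 193 * u) ^ 2 + (-49 - 193 * u) * (112 - 193 * v)
              + (112 - 193 * v) ^ 2 := by
          simp only [normZω]; ring
        have h49 : normZω ((-7 : ℤ), (7 : ℤ)) = 49 := by norm_num [normZω]
        have := min1 u v
        rw [h49]
        linarith)
    simpa using this
  have h2 : d (-6, 7) (1, -1) = 10 := by
    have := hii (-6, 7) (1, -1) 2 (-8)
      ⟨0, 1, by norm_num [Prod.sub_def], by norm_num [Prod.sub_def]⟩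
      (by
        rintro x' y' ⟨u, v, e1, e2⟩
        simp only [Prod.sub_def, Prod.fst, Prod.snd] at e1 e2
        have hx : x' = -7 - 7 * u + 9 * v := by omega
        have hy : y' = 8 - 9 * u - 16 * v := by omega
        subst hx hy
        have key : (193 : ℤ) * normZω (-7 - 7 * u + 9 * v, 8 - 9 * u - 16 * v) =
            (-40 - 193 * u) ^ 2 + (-40 - 193 * u) * (119 - 193 * v)
              + (119 - 193 * v) ^ 2 := by
          simp only [normZω]; ring
        have h52 : normZω ((2 : ℤ), (-8 : ℤ)) = 52 := by norm_num [normZω]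
        have := min2 u v
        rw [h52]
        linarith)
    simpa using this
  have h3 : d (1, -1) (1, 0) = 1 := by
    have := hii (1, -1) (1, 0) 0 (-1)
      ⟨0, 0, by norm_num [Prod.sub_def], by norm_num [Prod.sub_def]⟩
      (by
        rintro x' y' ⟨u, v, e1, e2⟩
        simp only [Prod.sub_def, Prod.fst, Prod.snd] at e1 e2
        have hx : x' = -7 * u + 9 * v := by omega
        have hy : y' = -1 - 9 * u - 16 * v := by omega
        subst hx hy
        have key : (193 : ℤ) * normZω (-7 * u + 9 * v, -1 - 9 * u - 16 * v) =
            (-9 - 193 * u) ^ 2 + (-9 - 193 * u) * (-7 - 193 * v)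
              + (-7 - 193 * v) ^ 2 := by
          simp only [normZω]; ring
        have h1' : normZω ((0 : ℤ), (-1 : ℤ)) = 1 := by norm_num [normZω]
        have := min3 u v
        rw [h1']
        linarith)
    simpa using this
  have := hiii (-6, 7) (1, -1) (1, 0)
  omega
end

section
/- (Single error correction, Theorem 1.) Let n ≥ 1, let F be a finite field with exactly 6n+1 elements, and let β be a generator of Fˣ. Call a vector e : Fin n → F an admissible error pattern if either e = 0, or there is exactly one index i with e(i) ≠ 0 and at that index e(i)⁶ = 1. If e and e' are admissible error patterns with the same syndrome, i.e., Σ_{i<n} e(i)·βⁱ = Σ_{i<n} e'(i)·βⁱ, then e = e'. Consequently, the code C = {c : Fin n → F | Σ_{i<n} c(i)·βⁱ = 0} corrects every error pattern of the form e(x) = e_i xⁱ with Mannheim weight W_m(e_i) = 1. -/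
/-- An admissible error pattern: zero, or exactly one nonzero entry,
that entry being a sixth root of unity (an element of Mannheim weight 1). -/
def AdmissibleError {F : Type*} [Field F] {n : ℕ} (e : Fin n → F) : Prop :=
  e = 0 ∨ ∃ i : Fin n, e i ^ 6 = 1 ∧ ∀ j : Fin n, j ≠ i → e j = 0

lemma key_aux {F : Type*} [Field F] [Fintype F] (n : ℕ) (hn : 1 ≤ n)
    (hF : Fintype.card F = 6 * n + 1) (β : F) (hβ : orderOf β = 6 * n)
    (u u' : F) (hu : u ^ 6 = 1) (hu' : u' ^ 6 = 1) (i j : ℕ) (hi : i < n) (hj : j < n)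
    (h : u * β ^ i = u' * β ^ j) : i = j ∧ u = u' := by
  have h6n : 0 < 6 * n := by omega
  have hβ1 : β ^ (6 * n) = 1 := by rw [← hβ]; exact pow_orderOf_eq_one β
  have hβ0 : β ≠ 0 := by
    intro h0
    rw [h0, zero_pow (by omega)] at hβ1
    exact one_ne_zero hβ1.symm
  -- move to units
  set b : Fˣ := Units.mk0 β hβ0 with hb
  have hob : orderOf b = 6 * n := by
    rw [← hβ, ← orderOf_units]; rfl
  have hcard : Nat.card Fˣ = 6 * n := by
    rw [Nat.card_units, Nat.card_eq_fintype_card, hF]; omega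
  have htop : ∀ x : Fˣ, x ∈ Subgroup.zpowers b := by
    have : Subgroup.zpowers b = ⊤ := by
      apply Subgroup.eq_top_of_card_eq
      rw [Nat.card_zpowers, hob, hcard]
    intro x; rw [this]; trivial
  -- every sixth root of unity is b ^ (n * k) with k < 6
  have hroot : ∀ v : F, v ^ 6 = 1 → ∃ k < 6, v = β ^ (n * k) := by
    intro v hv
    have hv0 : v ≠ 0 := by
      intro h0; rw [h0, zero_pow (by norm_num)] at hv; exact one_ne_zero hv.symm
    obtain ⟨m, hm⟩ := (mem_powers_iff_mem_zpowers).2 (htop (Units.mk0 v hv0))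
    have hmF : β ^ m = v := by
      have := congrArg (Units.val) hm; simpa [hb] using this
    have h6m : β ^ (6 * m) = 1 := by
      rw [mul_comm, pow_mul, hmF, hv]
    have hdvd : 6 * n ∣ 6 * m := by
      rw [← hβ]; exact orderOf_dvd_of_pow_eq_one h6m
    obtain ⟨k, hk⟩ : n ∣ m := Nat.dvd_of_mul_dvd_mul_left (by norm_num : 0 < 6) hdvd
    refine ⟨k % 6, Nat.mod_lt _ (by norm_num), ?_⟩
    have : β ^ (n * k) = β ^ (n * (k % 6)) := by
      conv_lhs => rw [show k = 6 * (k / 6) + k % 6 from (Nat.div_add_mod k 6).symm]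
      rw [Nat.mul_add, pow_add, show n * (6 * (k / 6)) = 6 * n * (k / 6) by ring,
        pow_mul, hβ1, one_pow, one_mul]
    rw [← this, ← hk, hmF]
  obtain ⟨k, hk6, hku⟩ := hroot u hu
  obtain ⟨k', hk'6, hku'⟩ := hroot u' hu'
  have heq : β ^ (n * k + i) = β ^ (n * k' + j) := by
    rw [pow_add, pow_add, ← hku, ← hku', h]
  have hequ : b ^ (n * k + i) = b ^ (n * k' + j) := by
    apply Units.ext; simpa [hb] using heq
  have hmod : (n * k + i) ≡ (n * k' + j) [MOD 6 * n] := by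
    rw [← hob]; exact (pow_eq_pow_iff_modEq (x := b)).1 hequ
  have hb1 : n * k ≤ n * 5 := Nat.mul_le_mul_left n (by omega)
  have hb2 : n * k' ≤ n * 5 := Nat.mul_le_mul_left n (by omega)
  have : n * k + i = n * k' + j :=
    Nat.ModEq.eq_of_lt_of_lt hmod (by omega) (by omega)
  have hij : i = j ∧ k = k' := by
    interval_cases k <;> interval_cases k' <;> omega
  exact ⟨hij.1, by rw [hku, hku', hij.2]⟩

/-- Theorem 1: the code with parity-check matrix `(1, β, β², …, β^{n-1})` over a field
with `6n+1` elements corrects every single error of Mannheim weight 1: two admissible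
error patterns with the same syndrome coincide. -/
theorem stmt_7 {F : Type*} [Field F] [Fintype F] (n : ℕ) (hn : 1 ≤ n)
    (hF : Fintype.card F = 6 * n + 1) (β : F) (hβ : orderOf β = 6 * n)
    (e e' : Fin n → F) (he : AdmissibleError e) (he' : AdmissibleError e')
    (hsyn : ∑ i : Fin n, e i * β ^ (i : ℕ) = ∑ i : Fin n, e' i * β ^ (i : ℕ)) :
    e = e' := by
  have hβ0 : β ≠ 0 := by
    intro h0
    have hβ1 : β ^ (6 * n) = 1 := by rw [← hβ]; exact pow_orderOf_eq_one β
    rw [h0, zero_pow (by omega)] at hβ1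
    exact one_ne_zero hβ1.symm
  have hsum : ∀ (f : Fin n → F) (i : Fin n), (∀ j, j ≠ i → f j = 0) →
      ∑ k : Fin n, f k * β ^ (k : ℕ) = f i * β ^ (i : ℕ) := by
    intro f i hf
    exact Finset.sum_eq_single i (fun j _ hji => by rw [hf j hji, zero_mul])
      (fun h => absurd (Finset.mem_univ i) h)
  have hne : ∀ (v : F), v ^ 6 = 1 → v ≠ 0 := by
    intro v hv h0; rw [h0, zero_pow (by norm_num)] at hv; exact one_ne_zero hv.symm
  rcases he with he0 | ⟨i, hui, hzi⟩ <;> rcases he' with he'0 | ⟨j, huj, hzj⟩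
  · rw [he0, he'0]
  · exfalso
    rw [he0, hsum e' j hzj] at hsyn
    simp only [Pi.zero_apply, zero_mul, Finset.sum_const_zero] at hsyn
    exact (mul_ne_zero (hne _ huj) (pow_ne_zero _ hβ0)) hsyn.symm
  · exfalso
    rw [he'0, hsum e i hzi] at hsyn
    simp only [Pi.zero_apply, zero_mul, Finset.sum_const_zero] at hsyn
    exact (mul_ne_zero (hne _ hui) (pow_ne_zero _ hβ0)) hsyn
  · rw [hsum e i hzi, hsum e' j hzj] at hsyn
    obtain ⟨hij, huv⟩ := key_aux n hn hF β hβ (e i) (e' j) hui huj i j i.isLt j.isLt hsyn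
    have hij' : i = j := Fin.ext hij
    funext x
    by_cases hx : x = i
    · rw [hx, huv, hij']
    · rw [hzi x hx, hzj x (by rw [← hij']; exact hx)]
end

section
/- (Perfect 1-error-correcting codes.) Let n ≥ 1, let F be a finite field with exactly 6n+1 elements, let β be a generator of Fˣ, and let C = {c : Fin n → F | Σ_{i<n} c(i)·βⁱ = 0}. Then every vector v : Fin n → F can be written in exactly one way as v = c + e, where c ∈ C and e is an admissible error pattern (e = 0, or e has exactly one nonzero entry and that entry is a sixth root of unity). In other words, the balls of Mannheim radius 1 centered at the codewords of C partition Fⁿ, so C is a perfect 1-error-correcting code with respect to the Mannheim metric. -/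
section Aux

variable {F : Type*} [Field F] [Fintype F] {n : ℕ}

lemma aux_beta_ne_zero (n : ℕ) (hn : 1 ≤ n) (β : F) (hβ : orderOf β = 6 * n) : β ≠ 0 := by
  intro h
  subst h
  have h1 : (0 : F) ^ (6 * n) = 1 := by rw [← hβ]; exact pow_orderOf_eq_one 0
  rw [zero_pow (by omega)] at h1
  exact zero_ne_one h1

/-- injectivity of syndromes of weight-1 errors -/
lemma aux_inj (n : ℕ) (hn : 1 ≤ n) (β : F) (hβ : orderOf β = 6 * n)
    {ζ ζ' : F} (hζ : ζ ^ 6 = 1) (hζ' : ζ' ^ 6 = 1) {i i' : Fin n}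
    (h : ζ * β ^ (i : ℕ) = ζ' * β ^ (i' : ℕ)) : i = i' ∧ ζ = ζ' := by
  have hβ0 : β ≠ 0 := aux_beta_ne_zero n hn β hβ
  -- wlog i' ≤ i
  have key : ∀ (ζ ζ' : F), ζ ^ 6 = 1 → ζ' ^ 6 = 1 → ∀ i i' : Fin n, (i' : ℕ) ≤ i →
      ζ * β ^ (i : ℕ) = ζ' * β ^ (i' : ℕ) → i = i' ∧ ζ = ζ' := by
    intro ζ ζ' hζ hζ' i i' hle h
    have h1 : ζ * β ^ ((i : ℕ) - i') = ζ' := by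
      have hb : β ^ (i : ℕ) = β ^ ((i : ℕ) - i') * β ^ (i' : ℕ) := by
        rw [← pow_add]; congr 1; omega
      have hpow : β ^ (i' : ℕ) ≠ 0 := pow_ne_zero _ hβ0
      apply mul_right_cancel₀ hpow
      rw [mul_assoc, ← hb, h]
    have h6 : β ^ (6 * ((i : ℕ) - i')) = 1 := by
      have h2 := congrArg (· ^ 6) h1
      simp only [mul_pow, hζ, hζ', one_mul, ← pow_mul] at h2
      rw [← h2]; ring_nf
    have hdvd : 6 * n ∣ 6 * ((i : ℕ) - i') := by
      rw [← hβ]; exact orderOf_dvd_of_pow_eq_one h6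
    have hd : n ∣ (i : ℕ) - i' := by
      rcases hdvd with ⟨k, hk⟩
      exact ⟨k, Nat.eq_of_mul_eq_mul_left (show 0 < 6 by norm_num) (by rw [hk, mul_assoc])⟩
    have hd0 : (i : ℕ) - i' = 0 := Nat.eq_zero_of_dvd_of_lt hd (by omega)
    refine ⟨Fin.ext (by omega), ?_⟩
    rw [hd0] at h1
    simpa using h1
  rcases le_or_gt (i' : ℕ) i with hle | hlt
  · exact key ζ ζ' hζ hζ' i i' hle h
  · obtain ⟨h1, h2⟩ := key ζ' ζ hζ' hζ i' i hlt.le h.symm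
    exact ⟨h1.symm, h2.symm⟩

/-- surjectivity: every nonzero element is ζ β^i -/
lemma aux_surj (n : ℕ) (hn : 1 ≤ n) (β : F) (hβ : orderOf β = 6 * n)
    (hF : Fintype.card F = 6 * n + 1)
    {s : F} (hs : s ≠ 0) : ∃ (ζ : F) (i : Fin n), ζ ^ 6 = 1 ∧ s = ζ * β ^ (i : ℕ) := by
  have hβ0 : β ≠ 0 := aux_beta_ne_zero n hn β hβ
  set u : Fˣ := Units.mk0 β hβ0 with hu
  have hou : orderOf u = 6 * n := by rw [← orderOf_units]; exact hβ
  have htop : Subgroup.zpowers u = ⊤ := by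
    classical
    apply Subgroup.eq_top_of_card_eq
    rw [Nat.card_zpowers, hou, Nat.card_eq_fintype_card, Fintype.card_units, hF]
    omega
  obtain ⟨k, hk⟩ : Units.mk0 s hs ∈ Subgroup.zpowers u := htop ▸ Subgroup.mem_top _
  set m : ℕ := (k % ((6 * n : ℕ) : ℤ)).toNat with hm
  have hmlt : m < 6 * n := by
    have h1 : 0 ≤ k % ((6 * n : ℕ) : ℤ) := Int.emod_nonneg _ (by positivity)
    have h2 : k % ((6 * n : ℕ) : ℤ) < (6 * n : ℕ) := Int.emod_lt_of_pos _ (by positivity)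
    omega
  have hum : u ^ m = Units.mk0 s hs := by
    rw [← hk, ← zpow_natCast, hm]
    rw [Int.toNat_of_nonneg (Int.emod_nonneg _ (by positivity))]
    rw [← hou]; exact zpow_mod_orderOf u k
  have hsm : s = β ^ m := by
    have := congrArg (Units.val) hum
    simpa [hu] using this.symm
  -- write m = q * n + r
  refine ⟨β ^ ((m / n) * n), ⟨m % n, Nat.mod_lt _ (by omega)⟩, ?_, ?_⟩
  · rw [← pow_mul]
    exact orderOf_dvd_iff_pow_eq_one.mp (by rw [hβ]; exact ⟨m / n, by ring⟩)
  · rw [hsm, ← pow_add]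
    congr 1
    exact (Nat.div_add_mod' m n).symm

lemma aux_syndrome_single (n : ℕ) (β : F) (i : Fin n) (ζ : F) :
    ∑ j : Fin n, (Pi.single i ζ : Fin n → F) j * β ^ (j : ℕ) = ζ * β ^ (i : ℕ) := by
  rw [Finset.sum_eq_single i]
  · simp
  · intro j _ hj; simp [Pi.single_eq_of_ne hj]
  · simp

end Aux

/-- The code `C = {c | ∑ c i · βⁱ = 0}` over a field with `6n+1` elements is a perfect
1-error-correcting code for the Mannheim metric: every vector is uniquely a codeword
plus an admissible error pattern. -/
theorem stmt_8 {F : Type*} [Field F] [Fintype F] (n : ℕ) (hn : 1 ≤ n)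
    (hF : Fintype.card F = 6 * n + 1) (β : F) (hβ : orderOf β = 6 * n)
    (v : Fin n → F) :
    ∃! p : (Fin n → F) × (Fin n → F),
      (∑ i : Fin n, p.1 i * β ^ (i : ℕ) = 0) ∧ AdmissibleError p.2 ∧ v = p.1 + p.2 := by
  classical
  have hβ0 : β ≠ 0 := aux_beta_ne_zero n hn β hβ
  set s : F := ∑ i : Fin n, v i * β ^ (i : ℕ) with hs
  have hsyn : ∀ c e : Fin n → F, v = c + e →
      (∑ i : Fin n, c i * β ^ (i : ℕ)) + (∑ i : Fin n, e i * β ^ (i : ℕ)) = s := by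
    intro c e hce
    rw [hs, ← Finset.sum_add_distrib]
    apply Finset.sum_congr rfl
    intro j _
    rw [hce]; simp [add_mul]
  have hzeta0 : ∀ ζ : F, ζ ^ 6 = 1 → ζ ≠ 0 := by
    intro ζ h h0; rw [h0] at h; simp at h
  by_cases h0 : s = 0
  · refine ⟨(v, 0), ⟨by rw [← hs]; exact h0, Or.inl rfl, by simp⟩, ?_⟩
    rintro ⟨c, e⟩ ⟨hc, he, hv⟩
    dsimp only at hc he hv ⊢
    have hse : (∑ i : Fin n, e i * β ^ (i : ℕ)) = 0 := by
      have := hsyn c e hv; rw [hc, zero_add, h0] at this; exact this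
    have he0 : e = 0 := by
      rcases he with he | ⟨i, hζ, hi⟩
      · exact he
      · exfalso
        have hsg : (∑ j : Fin n, e j * β ^ (j : ℕ)) = e i * β ^ (i : ℕ) := by
          rw [Finset.sum_eq_single i]
          · intro j _ hj; rw [hi j hj]; ring
          · simp
        rw [hsg] at hse
        exact (mul_ne_zero (hzeta0 _ hζ) (pow_ne_zero _ hβ0)) hse
    subst he0
    simp only [add_zero] at hv
    rw [hv]
  · obtain ⟨ζ, i, hζ, hsζ⟩ := aux_surj n hn β hβ hF h0
    set ev : Fin n → F := Pi.single i ζ with hev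
    have hev_syn : (∑ j : Fin n, ev j * β ^ (j : ℕ)) = ζ * β ^ (i : ℕ) :=
      aux_syndrome_single n β i ζ
    refine ⟨(v - ev, ev), ⟨?_, ?_, by dsimp only; rw [sub_add_cancel]⟩, ?_⟩
    · dsimp only
      have h1 : ∑ j : Fin n, (v - ev) j * β ^ (j : ℕ)
          = s - ∑ j : Fin n, ev j * β ^ (j : ℕ) := by
        rw [hs, ← Finset.sum_sub_distrib]
        apply Finset.sum_congr rfl
        intro j _; simp [sub_mul]
      rw [h1, hev_syn, ← hsζ, sub_self]
    · refine Or.inr ⟨i, ?_, fun j hj => by simp [hev, Pi.single_eq_of_ne hj]⟩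
      simpa [hev] using hζ
    · rintro ⟨c, e⟩ ⟨hc, he, hv⟩
      dsimp only at hc he hv ⊢
      have hse : (∑ j : Fin n, e j * β ^ (j : ℕ)) = s := by
        have := hsyn c e hv; rwa [hc, zero_add] at this
      rcases he with he | ⟨i', hζ', hi'⟩
      · exfalso; rw [he] at hse; simp at hse; exact h0 hse.symm
      · have hsingle : (∑ j : Fin n, e j * β ^ (j : ℕ)) = e i' * β ^ (i' : ℕ) := by
          rw [Finset.sum_eq_single i']
          · intro j _ hj; rw [hi' j hj]; ring
          · simp
        rw [hsingle] at hse
        obtain ⟨hii, hζζ⟩ := aux_inj n hn β hβ hζ' hζ (by rw [hse, hsζ])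
        have he_eq : e = ev := by
          funext j
          by_cases hji : j = i
          · subst hji
            rw [hev, Pi.single_eq_same, ← hζζ, ← hii]
          · rw [hi' j (by rw [hii]; exact hji), hev, Pi.single_eq_of_ne hji]
        refine Prod.ext ?_ he_eq
        dsimp only
        rw [hv, he_eq]; abel
end
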